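/- For every u > 0, the lower branch of the Lambert W function satisfies W_{−1}(−e^{−u−1}) > −1 − √(2u) − u. -/

import Mathlib

noncomputable section

/-- The lower real branch `W₋₁` of the Lambert W function: for
`x ∈ [-1/e, 0)` it is the smallest real solution `y` of `y * exp y = x`
(the solution with `y ≤ -1`). -/
noncomputable def Wm1 (x : ℝ) : ℝ := sInf {y : ℝ | y * Real.exp y = x}

lemma quad_lt_exp {s : ℝ} (hs : 0 < s) : 1 + s + s ^ 2 / 2 < Real.exp s := by
  have h := Real.sum_le_exp_of_nonneg hs.le 4
  have hsum : ∑ i ∈ Finset.range 4, s ^ i / (Nat.factorial i : ℝ)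
      = 1 + s + s ^ 2 / 2 + s ^ 3 / 6 := by
    simp [Finset.sum_range_succ, Nat.factorial]
    try ring
  rw [hsum] at h
  nlinarith [pow_pos hs 3]

lemma f_strictAntiOn : StrictAntiOn (fun y : ℝ => y * Real.exp y) (Set.Iic (-1)) := by
  apply strictAntiOn_of_deriv_neg (convex_Iic _)
  · exact (continuous_id.mul Real.continuous_exp).continuousOn
  · intro y hy
    rw [interior_Iic] at hy
    have hd : HasDerivAt (fun y : ℝ => y * Real.exp y)
        (1 * Real.exp y + y * Real.exp y) y :=
      (hasDerivAt_id y).mul (Real.hasDerivAt_exp y)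
    rw [hd.deriv]
    have : 1 + y < 0 := by linarith [Set.mem_Iio.mp hy]
    nlinarith [Real.exp_pos y]

/-- Chatzigeorgiou's bound: for every `u > 0`, the lower branch of the Lambert
W function satisfies `W₋₁(-e^(-u-1)) > -1 - √(2u) - u`. -/
theorem Wm1_lower_bound (u : ℝ) (hu : 0 < u) :
    Wm1 (-Real.exp (-u - 1)) > -1 - Real.sqrt (2 * u) - u := by
  set s := Real.sqrt (2 * u) with hs_def
  have hs : 0 < s := Real.sqrt_pos.mpr (by linarith)
  have hsq : s ^ 2 = 2 * u := Real.sq_sqrt (by linarith)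
  set c : ℝ := -1 - s - u with hc_def
  have hc1 : c < -1 := by nlinarith
  -- key inequality: c * exp c > - exp (-u-1)
  have h1 : 1 + s + u < Real.exp s := by nlinarith [quad_lt_exp hs]
  have h2 : (1 + s + u) * Real.exp c < Real.exp (-u - 1) := by
    calc (1 + s + u) * Real.exp c < Real.exp s * Real.exp c :=
          mul_lt_mul_of_pos_right h1 (Real.exp_pos c)
      _ = Real.exp (-u - 1) := by rw [← Real.exp_add]; congr 1; rw [hc_def]; ring
  have key : -Real.exp (-u - 1) < c * Real.exp c := by
    have hce : c * Real.exp c = -((1 + s + u) * Real.exp c) := by rw [hc_def]; ring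
    linarith
  set S : Set ℝ := {y : ℝ | y * Real.exp y = -Real.exp (-u - 1)} with hS_def
  have hclosed : IsClosed S :=
    isClosed_eq (continuous_id.mul Real.continuous_exp) continuous_const
  have hlb : ∀ y ∈ S, c < y := by
    intro y hy
    by_contra h
    push_neg at h
    rcases eq_or_lt_of_le h with rfl | hlt
    · exact absurd hy (fun h => key.ne' h)
    · have := f_strictAntiOn (Set.mem_Iic.mpr (by linarith)) (Set.mem_Iic.mpr hc1.le) hlt
      have hyx : y * Real.exp y = -Real.exp (-u - 1) := hy
      simp only at this
      linarith
  -- nonemptiness via IVT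
  have hcont : ContinuousOn (fun y : ℝ => y * Real.exp y) (Set.Icc c (-1)) :=
    (continuous_id.mul Real.continuous_exp).continuousOn
  have hsub := intermediate_value_Icc' hc1.le hcont
  have hmem : (-Real.exp (-u - 1)) ∈
      Set.Icc ((-1 : ℝ) * Real.exp (-1)) (c * Real.exp c) := by
    constructor
    · have : Real.exp (-u - 1) ≤ Real.exp (-1) := Real.exp_le_exp.mpr (by linarith)
      linarith
    · exact key.le
  obtain ⟨y₀, hy₀mem, hy₀⟩ := hsub hmem
  have hne : S.Nonempty := ⟨y₀, hy₀⟩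
  have hbdd : BddBelow S := ⟨c, fun y hy => (hlb y hy).le⟩
  have := hlb _ (hclosed.csInf_mem hne hbdd)
  simpa [Wm1, gt_iff_lt, hc_def] using this
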